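/- Let A be a C*-algebra and K a closed two-sided ideal in A. If D is a dense right ideal of A, then D ∩ K is dense in K. -/

import Mathlib

open scoped NNReal

/-- If `K` is a closed two-sided ideal in a C*-algebra `A` and `D` is a dense
right ideal of `A` (a subspace with `D·A ⊆ D`), then `D ∩ K` is dense in `K`. -/
theorem stmt_0 {A : Type*} [NonUnitalCStarAlgebra A]
    (K : TwoSidedIdeal A) (hKclosed : IsClosed (K : Set A))
    (D : Submodule ℂ A) (hDright : ∀ d ∈ D, ∀ a : A, d * a ∈ D)
    (hDdense : Dense (D : Set A)) :
    ∀ k ∈ K, k ∈ closure ((D : Set A) ∩ (K : Set A)) := by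
  intro k hk
  rw [Metric.mem_closure_iff]
  intro ε hε
  -- the element `a = k* k` lies in `K`, is selfadjoint and has nonnegative quasispectrum
  set a : A := star k * k with ha_def
  have haK : a ∈ K := K.mul_mem_left _ _ hk
  have ha_sa : IsSelfAdjoint a := IsSelfAdjoint.star_mul_self k
  have hσ : ∀ x ∈ quasispectrum ℝ a, 0 ≤ x := by
    intro x hx
    rw [Unitization.quasispectrum_eq_spectrum_inr' ℝ ℂ] at hx
    have h' : ((a : A) : Unitization ℂ A)
        = star ((k : A) : Unitization ℂ A) * ((k : A) : Unitization ℂ A) := by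
      simp [ha_def]
    rw [h'] at hx
    exact spectrum_star_mul_self_nonneg x hx
  set t : ℝ := (ε / 2) ^ 2 with ht_def
  have ht : 0 < t := by positivity
  -- approximate unit element `u = a (t + a)⁻¹`
  set g : ℝ → ℝ := fun x => x / (t + |x|) with hg_def
  have hgc : Continuous g := by
    apply Continuous.div continuous_id (by fun_prop)
    intro x
    positivity
  have hg0 : g 0 = 0 := by simp [hg_def]
  have hg_bound : ∀ x : ℝ, |g x| ≤ 1 := by
    intro x
    rw [hg_def, abs_div, abs_of_pos (by positivity : (0:ℝ) < t + |x|)]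
    rw [div_le_one (by positivity)]
    linarith [abs_nonneg x, ht]
  set u : A := cfcₙ g a with hu_def
  have hu_sa : IsSelfAdjoint u := cfcₙ_predicate g a
  have hu_norm : ‖u‖ ≤ 1 :=
    norm_cfcₙ_le fun x _ => by rw [Real.norm_eq_abs]; exact hg_bound x
  -- `u` belongs to `K`
  have huK : u ∈ K := by
    have hmem : u ∈ closure (K : Set A) := by
      rw [Metric.mem_closure_iff]
      intro δ hδ
      set s : ℝ := t * δ / 2 with hs_def
      have hs : 0 < s := by positivity
      set h : ℝ → ℝ := fun x => x / ((t + |x|) * (s + |x|)) with hh_def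
      have hhc : Continuous h := by
        apply Continuous.div continuous_id (by fun_prop)
        intro x
        positivity
      have hh0 : h 0 = 0 := by simp [hh_def]
      refine ⟨a * cfcₙ h a, K.mul_mem_right _ _ haK, ?_⟩
      rw [dist_eq_norm]
      have key : u - a * cfcₙ h a = cfcₙ (fun x => g x - x * h x) a := by
        rw [cfcₙ_sub g (fun x => x * h x) a hgc.continuousOn hg0
          (by exact (continuous_id.mul hhc).continuousOn) (by simp [hh0]),
          cfcₙ_mul (fun x => x) h a continuousOn_id rfl hhc.continuousOn hh0,
          cfcₙ_id' ℝ a]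
      have hbound : ‖u - a * cfcₙ h a‖ ≤ δ / 2 := by
        rw [key]
        apply norm_cfcₙ_le
        intro x hx
        have hx0 : 0 ≤ x := hσ x hx
        simp only [Real.norm_eq_abs, hg_def, hh_def]
        rw [abs_of_nonneg hx0]
        have hval : x / (t + x) - x * (x / ((t + x) * (s + x)))
            = x * s / ((t + x) * (s + x)) := by
          field_simp
          ring
        simp only [hval]
        rw [abs_of_nonneg (by positivity)]
        rw [div_le_iff₀ (by positivity)]
        have : δ / 2 = s / t := by rw [hs_def]; field_simp
        rw [this, div_mul_eq_mul_div, le_div_iff₀ ht]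
        nlinarith [mul_nonneg (mul_nonneg hs.le hs.le) ht.le,
          mul_nonneg (mul_nonneg hs.le hs.le) hx0, mul_nonneg (mul_nonneg hs.le hx0) hx0]
      linarith
    rwa [hKclosed.closure_eq] at hmem
  -- `‖k - k * u‖ ≤ ε / 2`
  have hy : ‖k - k * u‖ ≤ ε / 2 := by
    set y : A := k - k * u with hy_def
    have hstar : star y * y = a - a * u - (u * a - u * (a * u)) := by
      rw [hy_def, ha_def, star_sub, star_mul, hu_sa.star_eq]
      noncomm_ring
    have hcfc : a - a * u - (u * a - u * (a * u))
        = cfcₙ (fun x => x - x * g x - (g x * x - g x * (x * g x))) a := by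
      have e1 : cfcₙ (fun x : ℝ => x * g x) a = a * u := by
        rw [cfcₙ_mul (fun x => x) g a continuousOn_id rfl hgc.continuousOn hg0,
          cfcₙ_id' ℝ a]
      have e2 : cfcₙ (fun x : ℝ => g x * x) a = u * a := by
        rw [cfcₙ_mul g (fun x => x) a hgc.continuousOn hg0 continuousOn_id rfl,
          cfcₙ_id' ℝ a]
      have e3 : cfcₙ (fun x : ℝ => g x * (x * g x)) a = u * (a * u) := by
        rw [cfcₙ_mul g (fun x => x * g x) a hgc.continuousOn hg0
          (continuous_id.mul hgc).continuousOn (by simp [hg0]),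
          cfcₙ_mul (fun x => x) g a continuousOn_id rfl hgc.continuousOn hg0,
          cfcₙ_id' ℝ a]
      rw [cfcₙ_sub (fun x => x - x * g x) (fun x => g x * x - g x * (x * g x)) a
          (continuousOn_id.sub (continuous_id.mul hgc).continuousOn) (by simp [hg0])
          ((hgc.mul continuous_id).continuousOn.sub
            (hgc.mul (continuous_id.mul hgc)).continuousOn) (by simp [hg0]),
        cfcₙ_sub (fun x => x) (fun x => x * g x) a continuousOn_id rfl
          (continuous_id.mul hgc).continuousOn (by simp [hg0]),
        cfcₙ_sub (fun x => g x * x) (fun x => g x * (x * g x)) a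
          (hgc.mul continuous_id).continuousOn (by simp [hg0])
          (hgc.mul (continuous_id.mul hgc)).continuousOn (by simp [hg0]),
        cfcₙ_id' ℝ a, e1, e2, e3]
    have hnorm : ‖star y * y‖ ≤ t := by
      rw [hstar, hcfc]
      apply norm_cfcₙ_le
      intro x hx
      have hx0 : 0 ≤ x := hσ x hx
      set q : ℝ := g x with hq_def
      have hq : q * (t + x) = x := by
        rw [hq_def, hg_def]
        simp only [abs_of_nonneg hx0]
        field_simp
      have hq0 : 0 ≤ q := by
        rw [hq_def, hg_def]
        positivity
      have hq1 : q ≤ 1 := by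
        have := hg_bound x
        rw [← hq_def] at this
        exact (abs_le.mp this).2
      have hF : x - x * q - (q * x - q * (x * q)) = x * (1 - q) ^ 2 := by ring
      rw [Real.norm_eq_abs, hF, abs_of_nonneg (by positivity)]
      nlinarith [hq, hq0, hq1, hx0, ht]
    have hns : ‖star y * y‖ = ‖y‖ * ‖y‖ := CStarRing.norm_star_mul_self
    rw [hns, ht_def] at hnorm
    nlinarith [norm_nonneg y, hε]
  -- pick `d ∈ D` close to `k` and use `d * u ∈ D ∩ K`
  obtain ⟨d, hdD, hdk⟩ := Metric.mem_closure_iff.mp (hDdense k) (ε / 2) (by positivity)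
  refine ⟨d * u, ⟨hDright d hdD u, K.mul_mem_left d u huK⟩, ?_⟩
  have h1 : dist k (d * u) ≤ ‖k - k * u‖ + ‖(k - d) * u‖ := by
    rw [dist_eq_norm]
    calc ‖k - d * u‖ = ‖(k - k * u) + (k - d) * u‖ := by congr 1; noncomm_ring
      _ ≤ ‖k - k * u‖ + ‖(k - d) * u‖ := norm_add_le _ _
  have h2 : ‖(k - d) * u‖ ≤ ‖k - d‖ := by
    calc ‖(k - d) * u‖ ≤ ‖k - d‖ * ‖u‖ := norm_mul_le _ _
      _ ≤ ‖k - d‖ * 1 := by gcongr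
      _ = ‖k - d‖ := mul_one _
  have h3 : ‖k - d‖ < ε / 2 := by rwa [← dist_eq_norm]
  linarith
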